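/- Theorem 5.1 (two minimizers have equal normals along the connecting segment): Let u : Ω → ℝ be Lipschitz, let φ be a test function, and set v = u + φ. Suppose both u and v are minimizers for 𝔉. For ε ∈ ℝ set u_ε = u + ε(v − u) = u + εφ. Then for any pair of values ε₁, ε₂ ∈ [0,1] that are regular for u, φ, one has N(u_{ε₁})(x) = N(u_{ε₂})(x) for Lebesgue-a.e. x ∈ Ω ∖ (S(u_{ε₁}) ∪ S(u_{ε₂})). -/

import Mathlib

open MeasureTheory
open scoped RealInnerProductSpace ENNReal

section AuxGrad
variable {m : ℕ}

lemma norm_gradient_eq (f : EuclideanSpace ℝ (Fin m) → ℝ) (x : EuclideanSpace ℝ (Fin m)) :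
    ‖gradient f x‖ = ‖fderiv ℝ f x‖ :=
  LinearIsometryEquiv.norm_map _ _

lemma measurable_gradient' (f : EuclideanSpace ℝ (Fin m) → ℝ) :
    Measurable (gradient f) := by
  show Measurable fun x => (InnerProductSpace.toDual ℝ _).symm (fderiv ℝ f x)
  exact ((InnerProductSpace.toDual ℝ _).symm.continuous.measurable).comp (measurable_fderiv ℝ f)

lemma gradient_const_mul' (c : ℝ) (f : EuclideanSpace ℝ (Fin m) → ℝ)
    (x : EuclideanSpace ℝ (Fin m)) :
    gradient (fun y => c * f y) x = c • gradient f x := by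
  rcases eq_or_ne c 0 with rfl | hc
  · simp only [zero_mul, zero_smul]
    exact gradient_const x 0
  by_cases hd : DifferentiableAt ℝ f x
  · show (InnerProductSpace.toDual ℝ _).symm (fderiv ℝ (fun y => c * f y) x)
        = c • (InnerProductSpace.toDual ℝ _).symm (fderiv ℝ f x)
    rw [fderiv_const_mul hd c, _root_.map_smul]
  · have hd' : ¬ DifferentiableAt ℝ (fun y => c * f y) x := by
      intro h
      have h2 := h.const_mul c⁻¹
      simp only [inv_mul_cancel_left₀ hc] at h2
      exact hd h2
    show (InnerProductSpace.toDual ℝ _).symm (fderiv ℝ (fun y => c * f y) x)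
        = c • (InnerProductSpace.toDual ℝ _).symm (fderiv ℝ f x)
    rw [fderiv_zero_of_not_differentiableAt hd, fderiv_zero_of_not_differentiableAt hd']
    simp

lemma gradient_add' {f g : EuclideanSpace ℝ (Fin m) → ℝ} {x : EuclideanSpace ℝ (Fin m)}
    (hf : DifferentiableAt ℝ f x) (hg : DifferentiableAt ℝ g x) :
    gradient (fun y => f y + g y) x = gradient f x + gradient g x := by
  show (InnerProductSpace.toDual ℝ _).symm (fderiv ℝ (fun y => f y + g y) x) = _
  rw [fderiv_fun_add hf hg, _root_.map_add]
  rfl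
end AuxGrad

/-- The vector field `∇u + ε ∇φ + F⃗` (the a.e. gradient of `u_ε = u + ε φ`
shifted by `F⃗`). -/
noncomputable def gradShift {m : ℕ} (u φ : EuclideanSpace ℝ (Fin m) → ℝ)
    (F : EuclideanSpace ℝ (Fin m) → EuclideanSpace ℝ (Fin m)) (ε : ℝ)
    (x : EuclideanSpace ℝ (Fin m)) : EuclideanSpace ℝ (Fin m) :=
  gradient u x + ε • gradient φ x + F x

/-- The singular set `S(u_ε) = {x ∈ Ω : ∇u_ε + F⃗ = 0}` of `u_ε = u + ε φ`. -/
def singSet {m : ℕ} (Ω : Set (EuclideanSpace ℝ (Fin m)))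
    (u φ : EuclideanSpace ℝ (Fin m) → ℝ)
    (F : EuclideanSpace ℝ (Fin m) → EuclideanSpace ℝ (Fin m)) (ε : ℝ) :
    Set (EuclideanSpace ℝ (Fin m)) :=
  {x ∈ Ω | gradShift u φ F ε x = 0}

/-- `u` is a minimizer for the generalized p-area functional
`𝔉(v) = ∫_Ω (|∇v + F⃗| + H v)`: for every test function `ψ`
(a Lipschitz function with compact support contained in `Ω`) one has `𝔉(u) ≤ 𝔉(u + ψ)`. -/
def IsPMinimizer {m : ℕ} (Ω : Set (EuclideanSpace ℝ (Fin m)))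
    (F : EuclideanSpace ℝ (Fin m) → EuclideanSpace ℝ (Fin m))
    (H : EuclideanSpace ℝ (Fin m) → ℝ) (u : EuclideanSpace ℝ (Fin m) → ℝ) : Prop :=
  ∀ ψ : EuclideanSpace ℝ (Fin m) → ℝ, (∃ K, LipschitzWith K ψ) →
    HasCompactSupport ψ → tsupport ψ ⊆ Ω →
    (∫ x in Ω, (‖gradient u x + F x‖ + H x * u x)) ≤
      ∫ x in Ω, (‖gradient u x + gradient ψ x + F x‖ + H x * (u x + ψ x))

set_option maxHeartbeats 1000000 in
/-- **Theorem 5.1**: if `u` and `v = u + φ` are both minimizers for `𝔉`, then for any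
pair of regular values `ε₁, ε₂ ∈ [0,1]`, the unit normals `N(u_{ε₁})` and `N(u_{ε₂})`
agree a.e. on `Ω ∖ (S(u_{ε₁}) ∪ S(u_{ε₂}))`. -/
theorem normals_agree_of_two_minimizers {m : ℕ} (hm : 1 ≤ m)
    (Ω : Set (EuclideanSpace ℝ (Fin m)))
    (hΩopen : IsOpen Ω) (hΩbdd : Bornology.IsBounded Ω)
    (hΩne : Ω.Nonempty) (hΩconn : IsConnected Ω)
    (F : EuclideanSpace ℝ (Fin m) → EuclideanSpace ℝ (Fin m))
    (hF : IntegrableOn F Ω volume)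
    (H : EuclideanSpace ℝ (Fin m) → ℝ)
    (hH : MemLp H ⊤ (volume.restrict Ω))
    (u : EuclideanSpace ℝ (Fin m) → ℝ) (hu : ∃ K, LipschitzOnWith K u Ω)
    (φ : EuclideanSpace ℝ (Fin m) → ℝ) (hφ : ∃ K, LipschitzWith K φ)
    (hφsupp : HasCompactSupport φ) (hφΩ : tsupport φ ⊆ Ω)
    (humin : IsPMinimizer Ω F H u)
    (hvmin : IsPMinimizer Ω F H (fun x => u x + φ x))
    (ε₁ ε₂ : ℝ) (hε₁ : ε₁ ∈ Set.Icc (0 : ℝ) 1) (hε₂ : ε₂ ∈ Set.Icc (0 : ℝ) 1)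
    (hreg₁ : volume (singSet Ω u φ F ε₁ ∩ {x | gradient φ x ≠ 0}) = 0)
    (hreg₂ : volume (singSet Ω u φ F ε₂ ∩ {x | gradient φ x ≠ 0}) = 0) :
    ∀ᵐ x ∂(volume.restrict (Ω \ (singSet Ω u φ F ε₁ ∪ singSet Ω u φ F ε₂))),
      ‖gradShift u φ F ε₁ x‖⁻¹ • gradShift u φ F ε₁ x =
        ‖gradShift u φ F ε₂ x‖⁻¹ • gradShift u φ F ε₂ x := by
  classical
  obtain ⟨Ku, hKu⟩ := hu
  obtain ⟨Kφ, hKφ⟩ := hφ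
  have hΩmeas : MeasurableSet Ω := hΩopen.measurableSet
  obtain ⟨x₀, hx₀⟩ := hΩne
  set g : ℝ → EuclideanSpace ℝ (Fin m) → ℝ :=
    fun ε x => ‖gradShift u φ F ε x‖ + H x * (u x + ε * φ x) with hg
  set G : ℝ → ℝ := fun ε => ∫ x in Ω, g ε x with hGdef
  have hμΩ : volume Ω < ⊤ := hΩbdd.measure_lt_top
  -- pointwise bounds
  have hgu : ∀ x ∈ Ω, ‖gradient u x‖ ≤ Ku := fun x hx => by
    rw [norm_gradient_eq]
    exact norm_fderiv_le_of_lipschitzOn ℝ (hΩopen.mem_nhds hx) hKu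
  have hgφ : ∀ x, ‖gradient φ x‖ ≤ Kφ := fun x => by
    rw [norm_gradient_eq]
    exact norm_fderiv_le_of_lipschitz ℝ hKφ
  have hub : ∀ x ∈ Ω, |u x| ≤ |u x₀| + Ku * Metric.diam Ω := by
    intro x hx
    have h1 : dist (u x) (u x₀) ≤ Ku * dist x x₀ := hKu.dist_le_mul x hx x₀ hx₀
    have h2 : dist x x₀ ≤ Metric.diam Ω := Metric.dist_le_diam_of_mem hΩbdd hx hx₀
    have h3 : |u x| - |u x₀| ≤ |u x - u x₀| := abs_sub_abs_le_abs_sub _ _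
    rw [Real.dist_eq] at h1
    have h4 : (Ku : ℝ) * dist x x₀ ≤ Ku * Metric.diam Ω :=
      mul_le_mul_of_nonneg_left h2 Ku.coe_nonneg
    linarith
  have hφb : ∀ x ∈ Ω, |φ x| ≤ |φ x₀| + Kφ * Metric.diam Ω := by
    intro x hx
    have h1 : dist (φ x) (φ x₀) ≤ Kφ * dist x x₀ := hKφ.dist_le_mul x x₀
    have h2 : dist x x₀ ≤ Metric.diam Ω := Metric.dist_le_diam_of_mem hΩbdd hx hx₀
    have h3 : |φ x| - |φ x₀| ≤ |φ x - φ x₀| := abs_sub_abs_le_abs_sub _ _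
    rw [Real.dist_eq] at h1
    have h4 : (Kφ : ℝ) * dist x x₀ ≤ Kφ * Metric.diam Ω :=
      mul_le_mul_of_nonneg_left h2 Kφ.coe_nonneg
    linarith
  set Cu : ℝ := |u x₀| + Ku * Metric.diam Ω with hCu
  set Cφ : ℝ := |φ x₀| + Kφ * Metric.diam Ω with hCφ
  have hCu0 : 0 ≤ Cu := le_trans (abs_nonneg _) (hub x₀ hx₀)
  have hCφ0 : 0 ≤ Cφ := le_trans (abs_nonneg _) (hφb x₀ hx₀)
  -- essential bound for H
  have hHC : ∃ C : ℝ, 0 ≤ C ∧ ∀ᵐ x ∂(volume.restrict Ω), |H x| ≤ C := by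
    refine ⟨(eLpNorm H ⊤ (volume.restrict Ω)).toReal, ENNReal.toReal_nonneg, ?_⟩
    have hlt : eLpNorm H ⊤ (volume.restrict Ω) < ⊤ := hH.eLpNorm_lt_top
    have h1 : ∀ᵐ x ∂(volume.restrict Ω),
        (‖H x‖₊ : ℝ≥0∞) ≤ eLpNormEssSup H (volume.restrict Ω) := ae_le_eLpNormEssSup
    filter_upwards [h1] with x hx
    rw [← eLpNorm_exponent_top] at hx
    have := ENNReal.toReal_mono hlt.ne hx
    simpa [Real.norm_eq_abs] using this
  obtain ⟨CH, hCH0, hCH⟩ := hHC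
  -- measurability
  have hmu : Measurable (gradient u) := measurable_gradient' u
  have hmφ : Measurable (gradient φ) := measurable_gradient' φ
  have huAE : AEStronglyMeasurable u (volume.restrict Ω) :=
    (hKu.continuousOn.aemeasurable hΩmeas).aestronglyMeasurable
  have hφAE : AEStronglyMeasurable φ (volume.restrict Ω) :=
    (hKφ.continuous.measurable).aestronglyMeasurable
  have hHA : AEStronglyMeasurable H (volume.restrict Ω) := hH.aestronglyMeasurable
  have hAae : ∀ ε : ℝ, AEStronglyMeasurable (gradShift u φ F ε) (volume.restrict Ω) := by
    intro ε
    have h1 : Measurable fun x => gradient u x + ε • gradient φ x :=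
      hmu.add (hmφ.const_smul ε)
    exact h1.aestronglyMeasurable.add hF.aestronglyMeasurable
  -- integrability
  have hgint : ∀ ε : ℝ, IntegrableOn (g ε) Ω volume := by
    intro ε
    have hnorm : IntegrableOn (fun x => ‖gradShift u φ F ε x‖) Ω volume := by
      have hb : Integrable (fun x => ((Ku : ℝ) + |ε| * Kφ) + ‖F x‖) (volume.restrict Ω) :=
        (integrableOn_const hμΩ.ne).add hF.norm
      refine hb.mono' ((hAae ε).norm) ?_
      filter_upwards [ae_restrict_mem hΩmeas] with x hx
      rw [norm_norm]
      have h1 := hgu x hx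
      have h2 : ‖ε • gradient φ x‖ ≤ |ε| * Kφ := by
        rw [norm_smul, Real.norm_eq_abs]
        exact mul_le_mul_of_nonneg_left (hgφ x) (abs_nonneg ε)
      calc ‖gradShift u φ F ε x‖
          ≤ ‖gradient u x + ε • gradient φ x‖ + ‖F x‖ := norm_add_le _ _
        _ ≤ (‖gradient u x‖ + ‖ε • gradient φ x‖) + ‖F x‖ := by
            gcongr; exact norm_add_le _ _
        _ ≤ ((Ku : ℝ) + |ε| * Kφ) + ‖F x‖ := by gcongr
    have hHint : IntegrableOn (fun x => H x * (u x + ε * φ x)) Ω volume := by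
      have hb : Integrable (fun _ : EuclideanSpace ℝ (Fin m) => CH * (Cu + |ε| * Cφ))
          (volume.restrict Ω) := integrableOn_const hμΩ.ne
      refine hb.mono' (hHA.mul (huAE.add (hφAE.const_mul ε))) ?_
      filter_upwards [hCH, ae_restrict_mem hΩmeas] with x hCx hx
      rw [Real.norm_eq_abs, abs_mul]
      have hinner : |u x + ε * φ x| ≤ Cu + |ε| * Cφ := by
        calc |u x + ε * φ x| ≤ |u x| + |ε * φ x| := abs_add_le _ _
          _ = |u x| + |ε| * |φ x| := by rw [abs_mul]
          _ ≤ Cu + |ε| * Cφ := by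
              gcongr
              · exact hub x hx
              · exact hφb x hx
      exact mul_le_mul hCx hinner (abs_nonneg _) hCH0
    exact hnorm.add hHint
  -- a.e. differentiability
  have hdiff : ∀ᵐ x ∂(volume.restrict Ω), DifferentiableAt ℝ u x ∧ DifferentiableAt ℝ φ x := by
    filter_upwards [hKu.ae_differentiableWithinAt hΩmeas, ae_restrict_mem hΩmeas,
      ae_restrict_of_ae hKφ.ae_differentiableAt] with x h1 h2 h3
    exact ⟨h1.differentiableAt (hΩopen.mem_nhds h2), h3⟩
  -- minimality of u : G 0 ≤ G ε
  have hmin0 : ∀ ε : ℝ, G 0 ≤ G ε := by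
    intro ε
    have hlip : ∃ K, LipschitzWith K (fun x => ε * φ x) :=
      ⟨‖ε‖₊ * Kφ, (lipschitzWith_smul ε).comp hKφ⟩
    have hsupp : HasCompactSupport (fun x => ε * φ x) := hφsupp.mul_left
    have hts : tsupport (fun x => ε * φ x) ⊆ Ω := tsupport_mul_subset_right.trans hφΩ
    have hle := humin (fun x => ε * φ x) hlip hsupp hts
    have hL : (∫ x in Ω, (‖gradient u x + F x‖ + H x * u x)) = G 0 := by
      simp only [hGdef]
      apply integral_congr_ae
      apply Filter.EventuallyEq.of_eq
      funext x
      simp [hg, gradShift]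
    have hR : (∫ x in Ω, (‖gradient u x + gradient (fun y => ε * φ y) x + F x‖
        + H x * (u x + ε * φ x))) = G ε := by
      simp only [hGdef]
      apply integral_congr_ae
      apply Filter.EventuallyEq.of_eq
      funext x
      rw [gradient_const_mul']
      simp [hg, gradShift]
    rw [hL, hR] at hle
    exact hle
  -- minimality of v : G 1 ≤ G ε
  have hmin1 : ∀ ε : ℝ, G 1 ≤ G ε := by
    intro ε
    have hlip : ∃ K, LipschitzWith K (fun x => (ε - 1) * φ x) :=
      ⟨‖ε - 1‖₊ * Kφ, (lipschitzWith_smul (ε - 1)).comp hKφ⟩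
    have hsupp : HasCompactSupport (fun x => (ε - 1) * φ x) := hφsupp.mul_left
    have hts : tsupport (fun x => (ε - 1) * φ x) ⊆ Ω := tsupport_mul_subset_right.trans hφΩ
    have hle := hvmin (fun x => (ε - 1) * φ x) hlip hsupp hts
    have hL : (∫ x in Ω, (‖gradient (fun x => u x + φ x) x + F x‖ + H x * (u x + φ x))) = G 1 := by
      simp only [hGdef]
      apply integral_congr_ae
      filter_upwards [hdiff] with x hx
      rw [gradient_add' hx.1 hx.2]
      simp only [hg, gradShift, one_smul, one_mul]
    have hR : (∫ x in Ω, (‖gradient (fun x => u x + φ x) x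
          + gradient (fun y => (ε - 1) * φ y) x + F x‖
        + H x * ((u x + φ x) + (ε - 1) * φ x))) = G ε := by
      simp only [hGdef]
      apply integral_congr_ae
      filter_upwards [hdiff] with x hx
      rw [gradient_add' hx.1 hx.2, gradient_const_mul']
      simp only [hg, gradShift]
      congr 1
      · congr 1
        module
      · ring
    rw [hL, hR] at hle
    exact hle
  -- pointwise convexity
  have hptw : ∀ (θ s t : ℝ), 0 ≤ θ → θ ≤ 1 → ∀ x,
      g ((1 - θ) * s + θ * t) x ≤ (1 - θ) * g s x + θ * g t x := by
    intro θ s t h0 h1 x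
    have hAeq : gradShift u φ F ((1 - θ) * s + θ * t) x
        = (1 - θ) • gradShift u φ F s x + θ • gradShift u φ F t x := by
      simp only [gradShift]
      module
    have hn : ‖gradShift u φ F ((1 - θ) * s + θ * t) x‖
        ≤ (1 - θ) * ‖gradShift u φ F s x‖ + θ * ‖gradShift u φ F t x‖ := by
      rw [hAeq]
      calc ‖(1 - θ) • gradShift u φ F s x + θ • gradShift u φ F t x‖
          ≤ ‖(1 - θ) • gradShift u φ F s x‖ + ‖θ • gradShift u φ F t x‖ := norm_add_le _ _
        _ = (1 - θ) * ‖gradShift u φ F s x‖ + θ * ‖gradShift u φ F t x‖ := by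
            rw [norm_smul, norm_smul, Real.norm_eq_abs, Real.norm_eq_abs,
              abs_of_nonneg (by linarith), abs_of_nonneg h0]
    have hH' : H x * (u x + ((1 - θ) * s + θ * t) * φ x)
        = (1 - θ) * (H x * (u x + s * φ x)) + θ * (H x * (u x + t * φ x)) := by ring
    simp only [hg]
    nlinarith [hn, hH']
  -- integrated convexity
  have hconv : ∀ (θ s t : ℝ), 0 ≤ θ → θ ≤ 1 →
      G ((1 - θ) * s + θ * t) ≤ (1 - θ) * G s + θ * G t := by
    intro θ s t h0 h1
    have hi1 := hgint s
    have hi2 := hgint t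
    have him := hgint ((1 - θ) * s + θ * t)
    have hle : G ((1 - θ) * s + θ * t) ≤ ∫ x in Ω, ((1 - θ) * g s x + θ * g t x) := by
      simp only [hGdef]
      exact integral_mono him ((hi1.const_mul _).add (hi2.const_mul _))
        (fun x => hptw θ s t h0 h1 x)
    rw [integral_add (hi1.const_mul _) (hi2.const_mul _), integral_const_mul,
      integral_const_mul] at hle
    simpa only [hGdef] using hle
  -- affinity on [0,1]
  have haff : ∀ ε ∈ Set.Icc (0 : ℝ) 1, G ε = (1 - ε) * G 0 + ε * G 1 := by
    intro ε hε
    have h1 : G ε ≤ (1 - ε) * G 0 + ε * G 1 := by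
      have := hconv ε 0 1 hε.1 hε.2
      simpa using this
    have a1 : (1 - ε) * G 0 ≤ (1 - ε) * G ε :=
      mul_le_mul_of_nonneg_left (hmin0 ε) (by linarith [hε.2])
    have a2 : ε * G 1 ≤ ε * G ε := mul_le_mul_of_nonneg_left (hmin1 ε) hε.1
    have hsum : (1 - ε) * G ε + ε * G ε = G ε := by ring
    linarith
  -- midpoint identity
  have hεmIcc : (ε₁ + ε₂) / 2 ∈ Set.Icc (0 : ℝ) 1 :=
    ⟨by linarith [hε₁.1, hε₂.1], by linarith [hε₁.2, hε₂.2]⟩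
  have hGm : G ((ε₁ + ε₂) / 2) = (1/2) * G ε₁ + (1/2) * G ε₂ := by
    rw [haff _ hεmIcc, haff ε₁ hε₁, haff ε₂ hε₂]
    ring
  have hnn : ∀ x, 0 ≤ (1/2) * g ε₁ x + (1/2) * g ε₂ x - g ((ε₁ + ε₂) / 2) x := by
    intro x
    have h := hptw (1/2) ε₁ ε₂ (by norm_num) (by norm_num) x
    have harg : (1 - (1/2 : ℝ)) * ε₁ + (1/2) * ε₂ = (ε₁ + ε₂) / 2 := by ring
    rw [harg] at h
    have hco : (1 - (1/2 : ℝ)) = 1/2 := by norm_num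
    rw [hco] at h
    linarith
  have hint0 : (∫ x in Ω, ((1/2) * g ε₁ x + (1/2) * g ε₂ x - g ((ε₁ + ε₂) / 2) x)) = 0 := by
    have hI1 : Integrable (fun x => (1/2 : ℝ) * g ε₁ x) (volume.restrict Ω) :=
      (hgint ε₁).const_mul _
    have hI2 : Integrable (fun x => (1/2 : ℝ) * g ε₂ x) (volume.restrict Ω) :=
      (hgint ε₂).const_mul _
    have hI12 : Integrable (fun x => (1/2 : ℝ) * g ε₁ x + (1/2 : ℝ) * g ε₂ x)
        (volume.restrict Ω) := hI1.add hI2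
    rw [integral_sub hI12 (hgint ((ε₁ + ε₂) / 2)), integral_add hI1 hI2,
      integral_const_mul, integral_const_mul]
    simp only [hGdef] at hGm
    linarith [hGm]
  have hae0 : (fun x => (1/2) * g ε₁ x + (1/2) * g ε₂ x - g ((ε₁ + ε₂) / 2) x)
      =ᶠ[ae (volume.restrict Ω)] 0 := by
    refine (integral_eq_zero_iff_of_nonneg_ae (Filter.Eventually.of_forall hnn) ?_).mp hint0
    exact ((((hgint ε₁).const_mul _).add ((hgint ε₂).const_mul _)).sub
      (hgint ((ε₁ + ε₂) / 2)))
  -- same ray a.e. on Ω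
  have hkey : ∀ᵐ x ∂(volume.restrict Ω),
      SameRay ℝ (gradShift u φ F ε₁ x) (gradShift u φ F ε₂ x) := by
    filter_upwards [hae0] with x hx
    simp only [Pi.zero_apply] at hx
    have hAeq : gradShift u φ F ((ε₁ + ε₂) / 2) x
        = (1/2 : ℝ) • (gradShift u φ F ε₁ x + gradShift u φ F ε₂ x) := by
      simp only [gradShift]
      module
    have e1 : ‖gradShift u φ F ((ε₁ + ε₂) / 2) x‖
        = (1/2 : ℝ) * ‖gradShift u φ F ε₁ x + gradShift u φ F ε₂ x‖ := by
      rw [hAeq, norm_smul]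
      norm_num
    simp only [hg] at hx
    rw [e1] at hx
    have hHmid : H x * (u x + ((ε₁ + ε₂) / 2) * φ x)
        = (1/2) * (H x * (u x + ε₁ * φ x)) + (1/2) * (H x * (u x + ε₂ * φ x)) := by ring
    have hnorm : ‖gradShift u φ F ε₁ x + gradShift u φ F ε₂ x‖
        = ‖gradShift u φ F ε₁ x‖ + ‖gradShift u φ F ε₂ x‖ := by linarith
    exact sameRay_iff_norm_add.mpr hnorm
  -- null-measurability of the singular sets
  obtain ⟨F', hF'meas, hFF'⟩ := hF.aestronglyMeasurable.aemeasurable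
  have hnullF : volume ({x | F x ≠ F' x} ∩ Ω) = 0 := by
    have h := hFF'
    rw [Filter.EventuallyEq, ae_iff] at h
    rwa [Measure.restrict_apply' hΩmeas] at h
  have hSnm : ∀ ε : ℝ, NullMeasurableSet (singSet Ω u φ F ε) volume := by
    intro ε
    have hmeas : MeasurableSet
        (Ω ∩ (fun x => gradient u x + ε • gradient φ x + F' x) ⁻¹' {0}) :=
      hΩmeas.inter (((hmu.add (hmφ.const_smul ε)).add hF'meas) (measurableSet_singleton 0))
    refine hmeas.nullMeasurableSet.congr ?_
    rw [Filter.eventuallyEq_set]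
    have hnm : ∀ᵐ x ∂volume, x ∉ ({x | F x ≠ F' x} ∩ Ω) := measure_eq_zero_iff_ae_notMem.mp hnullF
    filter_upwards [hnm] with x hxn
    simp only [Set.mem_inter_iff, Set.mem_preimage, Set.mem_singleton_iff, singSet,
      Set.mem_setOf_eq, gradShift]
    constructor
    · rintro ⟨h1, h2⟩
      have hFx : F x = F' x := by
        by_contra hne
        exact hxn ⟨hne, h1⟩
      exact ⟨h1, by rw [hFx]; exact h2⟩
    · rintro ⟨h1, h2⟩
      have hFx : F x = F' x := by
        by_contra hne
        exact hxn ⟨hne, h1⟩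
      exact ⟨h1, by rw [← hFx]; exact h2⟩
  have hDnm : NullMeasurableSet (Ω \ (singSet Ω u φ F ε₁ ∪ singSet Ω u φ F ε₂)) volume :=
    hΩmeas.nullMeasurableSet.diff ((hSnm ε₁).union (hSnm ε₂))
  have hkey' : ∀ᵐ x ∂volume, x ∈ Ω →
      SameRay ℝ (gradShift u φ F ε₁ x) (gradShift u φ F ε₂ x) :=
    (ae_restrict_iff' hΩmeas).mp hkey
  filter_upwards [ae_restrict_mem₀ hDnm, ae_restrict_of_ae hkey'] with x hxD hxΩ
  obtain ⟨hxΩ', hxS⟩ := hxD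
  have ha : gradShift u φ F ε₁ x ≠ 0 := fun h => hxS (Or.inl ⟨hxΩ', h⟩)
  have hb : gradShift u φ F ε₂ x ≠ 0 := fun h => hxS (Or.inr ⟨hxΩ', h⟩)
  exact (sameRay_iff_inv_norm_smul_eq_of_ne ha hb).mp (hxΩ hxΩ')
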